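/- Let p ≥ 1 be an integer and for each q ≥ 0 set b_{p,q} = Σ_{l=0}^{q} (β(2l,p,q) + β(2l+1,p,q)). Then in the formal power series ring ℤ[[y]] the identity (1−y)^{2p+1} · Σ_{q≥0} b_{p,q}·y^q = Σ_{q=0}^{p} (β(2q,p,q) + β(2q+1,p,q)) · y^q · (1−y)^{p−q} holds; in particular the left-hand side is a polynomial in y of degree at most p, and the q = 0 term of the right-hand side is (p+1)·(1−y)^p. -/

import Mathlib

/-- `aSeq m = Σ_{b=0}^{⌊m/2⌋} C(m,2b)·(2b)!/b!`. -/
def aSeq (m : ℕ) : ℕ :=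
  ∑ b ∈ Finset.range (m / 2 + 1), Nat.choose m (2 * b) * (Nat.factorial (2 * b) / Nat.factorial b)

/-- `beta k p q` : for `k = 2l` even it is `C(n-2l, p-l)·C(n, 2l)·aSeq(2l)` when
`l ≤ min(p,q)` and `0` otherwise; for `k = 2l+1` odd it is
`C(n-2l-1, p-l-1)·C(n, 2l+1)·aSeq(2l+1)` when `l ≤ q` and `l+1 ≤ p`, and `0` otherwise.
Here `n = p + q`. -/
def beta (k p q : ℕ) : ℕ :=
  if k % 2 = 0 then
    if k / 2 ≤ p ∧ k / 2 ≤ q then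
      Nat.choose (p + q - 2 * (k / 2)) (p - k / 2) * Nat.choose (p + q) (2 * (k / 2))
        * aSeq (2 * (k / 2))
    else 0
  else
    if k / 2 ≤ q ∧ k / 2 + 1 ≤ p then
      Nat.choose (p + q - (2 * (k / 2) + 1)) (p - (k / 2 + 1))
        * Nat.choose (p + q) (2 * (k / 2) + 1) * aSeq (2 * (k / 2) + 1)
    else 0

/-- `bpq p q = Σ_{l=0}^{q} (β(2l,p,q) + β(2l+1,p,q))`, the number of symmetric
`(2p,2q+1)` clans. -/
def bpq (p q : ℕ) : ℕ := ∑ l ∈ Finset.range (q + 1), (beta (2 * l) p q + beta (2 * l + 1) p q)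

lemma beta_two_mul (p q l : ℕ) :
    beta (2 * l) p q = if l ≤ p ∧ l ≤ q then
      Nat.choose (p + q - 2 * l) (p - l) * Nat.choose (p + q) (2 * l) * aSeq (2 * l)
    else 0 := by
  have h1 : (2 * l) % 2 = 0 := by omega
  have h2 : (2 * l) / 2 = l := by omega
  rw [beta, if_pos h1, h2]

lemma beta_two_mul_add_one (p q l : ℕ) :
    beta (2 * l + 1) p q = if l ≤ q ∧ l + 1 ≤ p then
      Nat.choose (p + q - (2 * l + 1)) (p - (l + 1)) * Nat.choose (p + q) (2 * l + 1)
        * aSeq (2 * l + 1)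
    else 0 := by
  have h1 : ¬ ((2 * l + 1) % 2 = 0) := by omega
  have h2 : (2 * l + 1) / 2 = l := by omega
  rw [beta, if_neg h1, h2]

lemma termwise (p m l : ℕ) :
    beta (2 * l) p m + beta (2 * l + 1) p m
      = (beta (2 * l) p l + beta (2 * l + 1) p l) * Nat.choose (p + m) (p + l) := by
  rw [beta_two_mul, beta_two_mul, beta_two_mul_add_one, beta_two_mul_add_one]
  by_cases hm : l ≤ m
  · by_cases hlp : l ≤ p
    · have base : Nat.choose (p + m) (2 * l) * Nat.choose (p + m - 2 * l) (p - l)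
          = Nat.choose (p + m) (p + l) * Nat.choose (p + l) (2 * l) := by
        have h := Nat.choose_mul (n := p + m) (show 2 * l ≤ p + l by omega)
        rw [show p + l - 2 * l = p - l by omega] at h
        exact h.symm
      have e1 : Nat.choose (p + m - 2 * l) (p - l) * Nat.choose (p + m) (2 * l) * aSeq (2 * l)
          = Nat.choose (p + l - 2 * l) (p - l) * Nat.choose (p + l) (2 * l) * aSeq (2 * l)
              * Nat.choose (p + m) (p + l) := by
        rw [show p + l - 2 * l = p - l by omega, Nat.choose_self, one_mul]
        calc Nat.choose (p + m - 2 * l) (p - l) * Nat.choose (p + m) (2 * l) * aSeq (2 * l)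
            = Nat.choose (p + m) (2 * l) * Nat.choose (p + m - 2 * l) (p - l) * aSeq (2 * l) := by
              ring
          _ = Nat.choose (p + m) (p + l) * Nat.choose (p + l) (2 * l) * aSeq (2 * l) := by
              rw [base]
          _ = Nat.choose (p + l) (2 * l) * aSeq (2 * l) * Nat.choose (p + m) (p + l) := by ring
      rw [if_pos (show l ≤ p ∧ l ≤ m from ⟨hlp, hm⟩),
        if_pos (show l ≤ p ∧ l ≤ l from ⟨hlp, le_refl l⟩)]
      by_cases hp1 : l + 1 ≤ p
      · have base2 : Nat.choose (p + m) (2 * l + 1) * Nat.choose (p + m - (2 * l + 1)) (p - (l + 1))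
            = Nat.choose (p + m) (p + l) * Nat.choose (p + l) (2 * l + 1) := by
          have h := Nat.choose_mul (n := p + m)
            (show 2 * l + 1 ≤ p + l by omega)
          rw [show p + l - (2 * l + 1) = p - (l + 1) by omega] at h
          exact h.symm
        have e2 : Nat.choose (p + m - (2 * l + 1)) (p - (l + 1)) * Nat.choose (p + m) (2 * l + 1)
              * aSeq (2 * l + 1)
            = Nat.choose (p + l - (2 * l + 1)) (p - (l + 1)) * Nat.choose (p + l) (2 * l + 1)
                * aSeq (2 * l + 1) * Nat.choose (p + m) (p + l) := by
          rw [show p + l - (2 * l + 1) = p - (l + 1) by omega, Nat.choose_self, one_mul]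
          calc Nat.choose (p + m - (2 * l + 1)) (p - (l + 1)) * Nat.choose (p + m) (2 * l + 1)
                * aSeq (2 * l + 1)
              = Nat.choose (p + m) (2 * l + 1) * Nat.choose (p + m - (2 * l + 1)) (p - (l + 1))
                  * aSeq (2 * l + 1) := by ring
            _ = Nat.choose (p + m) (p + l) * Nat.choose (p + l) (2 * l + 1)
                  * aSeq (2 * l + 1) := by rw [base2]
            _ = Nat.choose (p + l) (2 * l + 1) * aSeq (2 * l + 1)
                  * Nat.choose (p + m) (p + l) := by ring
        rw [if_pos (show l ≤ m ∧ l + 1 ≤ p from ⟨hm, hp1⟩),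
          if_pos (show l ≤ l ∧ l + 1 ≤ p from ⟨le_refl l, hp1⟩), add_mul, e1, e2]
      · rw [if_neg (show ¬(l ≤ m ∧ l + 1 ≤ p) by omega),
          if_neg (show ¬(l ≤ l ∧ l + 1 ≤ p) by omega), add_zero, add_zero]
        exact e1
    · rw [if_neg (show ¬(l ≤ p ∧ l ≤ m) by omega), if_neg (show ¬(l ≤ p ∧ l ≤ l) by omega),
        if_neg (show ¬(l ≤ m ∧ l + 1 ≤ p) by omega),
        if_neg (show ¬(l ≤ l ∧ l + 1 ≤ p) by omega)]
      simp
  · rw [if_neg (show ¬(l ≤ p ∧ l ≤ m) by omega), if_neg (show ¬(l ≤ m ∧ l + 1 ≤ p) by omega),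
      Nat.choose_eq_zero_of_lt (show p + m < p + l by omega), mul_zero]
    simp

lemma c_zero_of_gt {p l : ℕ} (h : p < l) :
    beta (2 * l) p l + beta (2 * l + 1) p l = 0 := by
  rw [beta_two_mul, beta_two_mul_add_one, if_neg (by omega), if_neg (by omega)]

lemma bpq_eq (p m : ℕ) :
    bpq p m = ∑ l ∈ Finset.range (p + 1),
      (beta (2 * l) p l + beta (2 * l + 1) p l) * Nat.choose (p + m) (p + l) := by
  have key : ∀ N : ℕ, m + 1 ≤ N → p + 1 ≤ N →
      ∑ l ∈ Finset.range N,
        (beta (2 * l) p l + beta (2 * l + 1) p l) * Nat.choose (p + m) (p + l)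
      = ∑ l ∈ Finset.range (p + 1),
        (beta (2 * l) p l + beta (2 * l + 1) p l) * Nat.choose (p + m) (p + l) := by
    intro N h1 h2
    refine (Finset.sum_subset (by intro x hx; simp at *; omega) ?_).symm
    intro x _ hx
    simp only [Finset.mem_range, not_lt] at hx
    rw [c_zero_of_gt (by omega), zero_mul]
  calc bpq p m
      = ∑ l ∈ Finset.range (m + 1),
          (beta (2 * l) p l + beta (2 * l + 1) p l) * Nat.choose (p + m) (p + l) :=
        Finset.sum_congr rfl fun l _ => termwise p m l
    _ = ∑ l ∈ Finset.range (m + p + 1),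
          (beta (2 * l) p l + beta (2 * l + 1) p l) * Nat.choose (p + m) (p + l) := by
        refine Finset.sum_subset (by intro x hx; simp at *; omega) ?_
        intro x _ hx
        simp only [Finset.mem_range, not_lt] at hx
        rw [Nat.choose_eq_zero_of_lt (by omega), mul_zero]
    _ = _ := key _ (by omega) (by omega)

open PowerSeries in
lemma coeff_one_sub_pow (d : ℕ) : ∀ k : ℕ, d < k → coeff (R := ℤ) k ((1 - X : ℤ⟦X⟧) ^ d) = 0 := by
  induction d with
  | zero => intro k hk; rw [pow_zero, coeff_one, if_neg (by omega)]
  | succ d ih =>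
    intro k hk
    rw [pow_succ, mul_sub, mul_one, map_sub, ih k (by omega)]
    obtain ⟨k', rfl⟩ : ∃ k', k = k' + 1 := ⟨k - 1, by omega⟩
    rw [coeff_succ_mul_X, ih k' (by omega), sub_zero]

open PowerSeries in
lemma mk_choose_mul (p l : ℕ) (h : l ≤ p) :
    (1 - X : ℤ⟦X⟧) ^ (2 * p + 1) * mk (fun m => (Nat.choose (p + m) (p + l) : ℤ))
      = X ^ l * (1 - X) ^ (p - l) := by
  have key : (mk (fun m => (Nat.choose (p + m) (p + l) : ℤ)) : ℤ⟦X⟧)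
      = X ^ l * mk (fun n => (Nat.choose (p + l + n) (p + l) : ℤ)) := by
    ext m
    rw [coeff_mk, coeff_X_pow_mul']
    split_ifs with hlm
    · rw [coeff_mk]
      congr 2
      omega
    · rw [Nat.choose_eq_zero_of_lt (by omega)]
      simp
  have hinv : (mk (fun n => (Nat.choose (p + l + n) (p + l) : ℤ)) : ℤ⟦X⟧)
      * (1 - X) ^ (p + l + 1) = 1 := mk_add_choose_mul_one_sub_pow_eq_one ℤ (p + l)
  have hpow : (1 - X : ℤ⟦X⟧) ^ (2 * p + 1) = (1 - X) ^ (p - l) * (1 - X) ^ (p + l + 1) := by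
    rw [← pow_add]; congr 1; omega
  rw [key, hpow]
  calc (1 - X : ℤ⟦X⟧) ^ (p - l) * (1 - X) ^ (p + l + 1)
        * (X ^ l * mk fun n => (Nat.choose (p + l + n) (p + l) : ℤ))
      = X ^ l * (1 - X) ^ (p - l)
          * ((mk fun n => (Nat.choose (p + l + n) (p + l) : ℤ)) * (1 - X) ^ (p + l + 1)) := by
        ring
    _ = X ^ l * (1 - X) ^ (p - l) := by rw [hinv, mul_one]

open PowerSeries in
lemma mk_bpq_eq (p : ℕ) :
    (mk (fun q => (bpq p q : ℤ)) : ℤ⟦X⟧)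
      = ∑ l ∈ Finset.range (p + 1),
          ((beta (2 * l) p l + beta (2 * l + 1) p l : ℕ) : ℤ⟦X⟧)
            * mk (fun m => (Nat.choose (p + m) (p + l) : ℤ)) := by
  ext m
  rw [coeff_mk, map_sum, bpq_eq, Nat.cast_sum]
  refine Finset.sum_congr rfl fun l _ => ?_
  rw [show ((beta (2 * l) p l + beta (2 * l + 1) p l : ℕ) : ℤ⟦X⟧)
      = C (R := ℤ) ((beta (2 * l) p l + beta (2 * l + 1) p l : ℕ) : ℤ) from (map_natCast (C (R := ℤ)) _).symm,
    coeff_C_mul, coeff_mk]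
  push_cast
  ring

theorem generating_function_identity (p : ℕ) (hp : 1 ≤ p) :
    ((1 - PowerSeries.X : PowerSeries ℤ) ^ (2 * p + 1)
        * PowerSeries.mk (fun q => (bpq p q : ℤ))
      = ∑ q ∈ Finset.range (p + 1),
          ((beta (2 * q) p q + beta (2 * q + 1) p q : ℕ) : PowerSeries ℤ)
            * PowerSeries.X ^ q * (1 - PowerSeries.X) ^ (p - q)) ∧
    (∀ m : ℕ, p < m →
      PowerSeries.coeff (R := ℤ) m
        ((1 - PowerSeries.X : PowerSeries ℤ) ^ (2 * p + 1)
          * PowerSeries.mk (fun q => (bpq p q : ℤ))) = 0) ∧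
    beta 0 p 0 + beta 1 p 0 = p + 1 := by
  have main : (1 - PowerSeries.X : PowerSeries ℤ) ^ (2 * p + 1)
        * PowerSeries.mk (fun q => (bpq p q : ℤ))
      = ∑ q ∈ Finset.range (p + 1),
          ((beta (2 * q) p q + beta (2 * q + 1) p q : ℕ) : PowerSeries ℤ)
            * PowerSeries.X ^ q * (1 - PowerSeries.X) ^ (p - q) := by
    rw [mk_bpq_eq, Finset.mul_sum]
    refine Finset.sum_congr rfl fun l hl => ?_
    have hlp : l ≤ p := by simp at hl; omega
    calc (1 - PowerSeries.X : PowerSeries ℤ) ^ (2 * p + 1)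
          * (((beta (2 * l) p l + beta (2 * l + 1) p l : ℕ) : PowerSeries ℤ)
            * PowerSeries.mk (fun m => (Nat.choose (p + m) (p + l) : ℤ)))
        = ((beta (2 * l) p l + beta (2 * l + 1) p l : ℕ) : PowerSeries ℤ)
            * ((1 - PowerSeries.X) ^ (2 * p + 1)
              * PowerSeries.mk (fun m => (Nat.choose (p + m) (p + l) : ℤ))) := by ring
      _ = _ := by rw [mk_choose_mul p l hlp]; ring
  refine ⟨main, ?_, ?_⟩
  · intro m hm
    rw [main, map_sum]
    refine Finset.sum_eq_zero fun l hl => ?_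
    have hlp : l ≤ p := by simp at hl; omega
    rw [show ((beta (2 * l) p l + beta (2 * l + 1) p l : ℕ) : PowerSeries ℤ)
          * PowerSeries.X ^ l * (1 - PowerSeries.X) ^ (p - l)
        = ((beta (2 * l) p l + beta (2 * l + 1) p l : ℕ) : PowerSeries ℤ)
          * (PowerSeries.X ^ l * (1 - PowerSeries.X) ^ (p - l)) by ring,
      show ((beta (2 * l) p l + beta (2 * l + 1) p l : ℕ) : PowerSeries ℤ)
        = PowerSeries.C (R := ℤ) ((beta (2 * l) p l + beta (2 * l + 1) p l : ℕ) : ℤ)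
        from (map_natCast (PowerSeries.C (R := ℤ)) _).symm,
      PowerSeries.coeff_C_mul, PowerSeries.coeff_X_pow_mul',
      if_pos (show l ≤ m by omega), coeff_one_sub_pow (p - l) (m - l) (by omega), mul_zero]
  · have h0 : beta 0 p 0 = 1 := by
      have := beta_two_mul p 0 0
      simp only [mul_zero] at this
      rw [this, if_pos ⟨Nat.zero_le p, le_refl 0⟩]
      simp [aSeq, Nat.choose_self]
    have h1 : beta 1 p 0 = p := by
      have := beta_two_mul_add_one p 0 0
      simp only [mul_zero, zero_add] at this
      rw [this, if_pos ⟨le_refl 0, hp⟩]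
      simp [aSeq, Nat.choose_self, Nat.choose_one_right]
    omega
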